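/- Let k, h ∈ ℕ⁺, K = k + h, and let A ∈ ℝ^{m×N} satisfy the (K, δ_K)-RIP with 0 < δ_K < 1. Then A has the Null Space Property of order k with constant γ_k = √(k/h) · (1+δ_K)/(1−δ_K). -/

import Mathlib

open Finset

/-- ℓ¹ norm of a vector. -/
noncomputable def l1 {N : ℕ} (x : Fin N → ℝ) : ℝ := ∑ i, |x i|

/-- ℓ² norm of a vector. -/
noncomputable def l2 {n : ℕ} (x : Fin n → ℝ) : ℝ := Real.sqrt (∑ i, (x i) ^ 2)

/-- Restriction of a vector to an index set (zero off the set). -/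
noncomputable def restr {N : ℕ} (Λ : Finset (Fin N)) (x : Fin N → ℝ) : Fin N → ℝ :=
  fun i => if i ∈ Λ then x i else 0

/-- Support of a vector as a finset. -/
noncomputable def supp {N : ℕ} (z : Fin N → ℝ) : Finset (Fin N) :=
  univ.filter (fun i => z i ≠ 0)

/-- Null Space Property of order `k` with constant `γ`. -/
def NSP {m N : ℕ} (A : Matrix (Fin m) (Fin N) ℝ) (k : ℕ) (γ : ℝ) : Prop :=
  ∀ z : Fin N → ℝ, A.mulVec z = 0 → ∀ Λ : Finset (Fin N), Λ.card ≤ k →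
    l1 (restr Λ z) ≤ γ * l1 (restr Λᶜ z)

/-- Restricted Isometry Property of order `K` with constant `δ` (norm version). -/
noncomputable def RIP {m N : ℕ} (A : Matrix (Fin m) (Fin N) ℝ) (K : ℕ) (δ : ℝ) : Prop :=
  ∀ z : Fin N → ℝ, (supp z).card ≤ K →
    (1 - δ) * l2 z ≤ l2 (A.mulVec z) ∧ l2 (A.mulVec z) ≤ (1 + δ) * l2 z

/-- ℓ¹ best `k`-term approximation error. -/
noncomputable def sigma1 {N : ℕ} (k : ℕ) (x : Fin N → ℝ) : ℝ :=
  sInf {t : ℝ | ∃ z : Fin N → ℝ, (supp z).card ≤ k ∧ t = l1 (x - z)}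

/-- Index set of entries exceeding `r` in absolute value. -/
noncomputable def Sr {N : ℕ} (r : ℝ) (x : Fin N → ℝ) : Finset (Fin N) :=
  univ.filter (fun i => r < |x i|)

/-- The Hölder constant κ_p(N,k). -/
noncomputable def kappa (p : ℝ) (N k : ℕ) : ℝ :=
  if p = 1 then 1 else ((N - k : ℕ) : ℝ) ^ (1 - 1 / p)

/-- Membership in the class 𝒮^p_{η,k,r} of sparse vectors affected by bounded noise. -/
noncomputable def inClass {N : ℕ} (p η : ℝ) (k : ℕ) (r : ℝ) (x : Fin N → ℝ) : Prop :=
  (Sr r x).card ≤ k ∧ ∑ i ∈ (Sr r x)ᶜ, |x i| ^ p ≤ η ^ p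

/-- Entrywise hard thresholding with threshold `t`. -/
noncomputable def hardThr {N : ℕ} (t : ℝ) (z : Fin N → ℝ) : Fin N → ℝ :=
  fun i => if t < |z i| then z i else 0

lemma l1_restr {N : ℕ} (S : Finset (Fin N)) (v : Fin N → ℝ) :
    l1 (restr S v) = ∑ i ∈ S, |v i| := by
  simp [l1, restr, apply_ite abs, Finset.sum_ite_mem]

lemma l1_nonneg {N : ℕ} (x : Fin N → ℝ) : 0 ≤ l1 x :=
  Finset.sum_nonneg fun _ _ => abs_nonneg _

lemma l2_nonneg {n : ℕ} (x : Fin n → ℝ) : 0 ≤ l2 x := Real.sqrt_nonneg _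

lemma l2_eq_norm {n : ℕ} (x : Fin n → ℝ) :
    l2 x = ‖(WithLp.equiv 2 (Fin n → ℝ)).symm x‖ := by
  rw [EuclideanSpace.norm_eq]; simp [l2, sq_abs]

lemma l2_add_le {n : ℕ} (x y : Fin n → ℝ) : l2 (x + y) ≤ l2 x + l2 y := by
  rw [l2_eq_norm, l2_eq_norm, l2_eq_norm]
  exact norm_add_le _ _

lemma l2_neg {n : ℕ} (x : Fin n → ℝ) : l2 (-x) = l2 x := by simp [l2]

lemma l2_zero {n : ℕ} : l2 (0 : Fin n → ℝ) = 0 := by simp [l2]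

lemma l2_mono {n : ℕ} {x y : Fin n → ℝ} (hxy : ∀ i, (x i)^2 ≤ (y i)^2) : l2 x ≤ l2 y :=
  Real.sqrt_le_sqrt (Finset.sum_le_sum fun i _ => hxy i)

lemma restr_empty {N : ℕ} (v : Fin N → ℝ) : restr ∅ v = 0 := by
  funext i; simp [restr]

lemma supp_restr_subset {N : ℕ} (S : Finset (Fin N)) (v : Fin N → ℝ) :
    supp (restr S v) ⊆ S := by
  intro i hi
  simp only [supp, mem_filter, restr] at hi
  by_contra hiS
  simp [hiS] at hi

lemma sum_sq_restr {N : ℕ} (S : Finset (Fin N)) (v : Fin N → ℝ) :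
    ∑ i, (restr S v i)^2 = ∑ i ∈ S, (v i)^2 := by
  simp [restr, apply_ite (·^2), Finset.sum_ite_mem]

lemma l1_le_sqrt_card_mul_l2 {N : ℕ} (S : Finset (Fin N)) (v : Fin N → ℝ) :
    l1 (restr S v) ≤ Real.sqrt S.card * l2 (restr S v) := by
  have hcs := Finset.sum_mul_sq_le_sq_mul_sq S (fun _ => (1:ℝ)) (fun i => |v i|)
  simp only [one_mul, one_pow, Finset.sum_const, nsmul_eq_mul, mul_one, sq_abs] at hcs
  have h1 : l1 (restr S v) = ∑ i ∈ S, |v i| := l1_restr S v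
  have h2 : (∑ i ∈ S, |v i|)^2 ≤ (S.card : ℝ) * ∑ i, (restr S v i)^2 := by
    rw [sum_sq_restr]; exact hcs
  have h3 : l1 (restr S v) ≤ Real.sqrt ((S.card : ℝ) * ∑ i, (restr S v i)^2) := by
    rw [h1]
    calc ∑ i ∈ S, |v i| = Real.sqrt ((∑ i ∈ S, |v i|)^2) :=
          (Real.sqrt_sq (Finset.sum_nonneg fun _ _ => abs_nonneg _)).symm
      _ ≤ _ := Real.sqrt_le_sqrt h2
  calc l1 (restr S v) ≤ _ := h3
    _ = Real.sqrt S.card * l2 (restr S v) := by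
        rw [Real.sqrt_mul (by positivity)]; rfl

lemma l2_restr_le {N : ℕ} (S : Finset (Fin N)) (v : Fin N → ℝ) {b : ℝ} (hb : 0 ≤ b)
    (hbd : ∀ i ∈ S, |v i| ≤ b) : l2 (restr S v) ≤ Real.sqrt S.card * b := by
  have h1 : ∑ i, (restr S v i)^2 ≤ (S.card : ℝ) * b^2 := by
    rw [sum_sq_restr]
    calc ∑ i ∈ S, (v i)^2 ≤ ∑ i ∈ S, b^2 := by
          refine Finset.sum_le_sum fun i hi => ?_
          rw [← sq_abs]
          exact pow_le_pow_left₀ (abs_nonneg _) (hbd i hi) 2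
      _ = (S.card : ℝ) * b^2 := by simp [mul_comm]
  calc l2 (restr S v) ≤ Real.sqrt ((S.card : ℝ) * b^2) := Real.sqrt_le_sqrt h1
    _ = Real.sqrt S.card * b := by
        rw [Real.sqrt_mul (by positivity), Real.sqrt_sq hb]

lemma exists_top {N : ℕ} (w : Fin N → ℝ) :
    ∀ (n : ℕ) (S : Finset (Fin N)), ∃ T, T ⊆ S ∧ T.card = min n S.card ∧
      ∀ j ∈ S, j ∉ T → ∀ i ∈ T, w j ≤ w i := by
  intro n
  induction n with
  | zero => exact fun S => ⟨∅, by simp⟩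
  | succ n ih =>
    intro S
    rcases S.eq_empty_or_nonempty with rfl | hS
    · exact ⟨∅, by simp⟩
    · obtain ⟨a, haS, ha⟩ := S.exists_max_image w hS
      obtain ⟨T', hT'sub, hT'card, hT'prop⟩ := ih (S.erase a)
      have haT' : a ∉ T' := fun hmem => (mem_erase.mp (hT'sub hmem)).1 rfl
      refine ⟨insert a T', insert_subset haS (hT'sub.trans (erase_subset a S)), ?_, ?_⟩
      · rw [card_insert_of_notMem haT', hT'card, card_erase_of_mem haS]
        have : 1 ≤ S.card := card_pos.mpr hS
        omega
      · intro j hjS hjT i hiT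
        rcases mem_insert.mp hiT with rfl | hiT'
        · exact ha j hjS
        · exact hT'prop j (mem_erase.mpr ⟨fun hja => hjT (hja ▸ mem_insert_self a T'), hjS⟩)
            (fun hj => hjT (mem_insert_of_mem hj)) i hiT'

lemma restr_split {N : ℕ} {S T : Finset (Fin N)} (hT : T ⊆ S) (v : Fin N → ℝ) :
    restr S v = restr T v + restr (S \ T) v := by
  funext i
  simp only [restr, Pi.add_apply, mem_sdiff]
  by_cases hiT : i ∈ T
  · simp [hiT, hT hiT]
  · by_cases hiS : i ∈ S <;> simp [hiT, hiS]

lemma l1_split {N : ℕ} {S T : Finset (Fin N)} (hT : T ⊆ S) (v : Fin N → ℝ) :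
    l1 (restr S v) = l1 (restr T v) + l1 (restr (S \ T) v) := by
  rw [l1_restr, l1_restr, l1_restr, add_comm, Finset.sum_sdiff hT]

lemma keyC {m N : ℕ} (A : Matrix (Fin m) (Fin N) ℝ) (k h : ℕ) (hh : 0 < h)
    (δ : ℝ) (hδ0 : 0 < δ) (hRIP : RIP A (k + h) δ) (v : Fin N → ℝ) :
    ∀ (n : ℕ) (S : Finset (Fin N)), S.card ≤ n → ∀ b : ℝ, 0 ≤ b → (∀ i ∈ S, |v i| ≤ b) →
      l2 (A.mulVec (restr S v)) ≤ (1 + δ) * (Real.sqrt h * b + l1 (restr S v) / Real.sqrt h) := by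
  have hsh : (0:ℝ) < Real.sqrt h := Real.sqrt_pos.mpr (by exact_mod_cast hh)
  have h1δ : (0:ℝ) < 1 + δ := by linarith
  intro n
  induction n with
  | zero =>
    intro S hS b hb hbd
    rw [Finset.card_eq_zero.mp (Nat.le_zero.mp hS), restr_empty, Matrix.mulVec_zero, l2_zero]
    have : 0 ≤ l1 (restr (∅ : Finset (Fin N)) v) := l1_nonneg _
    positivity
  | succ n ih =>
    intro S hS b hb hbd
    rcases S.eq_empty_or_nonempty with rfl | hSne
    · rw [restr_empty, Matrix.mulVec_zero, l2_zero]
      have : 0 ≤ l1 (restr (∅ : Finset (Fin N)) v) := l1_nonneg _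
      positivity
    obtain ⟨T, hTsub, hTcard, hTtop⟩ := exists_top (fun i => |v i|) h S
    have hTle : T.card ≤ h := hTcard ▸ min_le_left _ _
    have hTpos : 0 < T.card := by
      rw [hTcard]; exact lt_min hh (card_pos.mpr hSne)
    set R := S \ T with hR
    have hsplit : restr S v = restr T v + restr R v := restr_split hTsub v
    have hRcard : R.card ≤ n := by
      rw [hR, card_sdiff_of_subset hTsub]
      omega
    have htri : l2 (A.mulVec (restr S v)) ≤
        l2 (A.mulVec (restr T v)) + l2 (A.mulVec (restr R v)) := by
      rw [hsplit, Matrix.mulVec_add]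
      exact l2_add_le _ _
    have hripT : l2 (A.mulVec (restr T v)) ≤ (1 + δ) * l2 (restr T v) :=
      (hRIP (restr T v) (le_trans (card_le_card (supp_restr_subset T v)) (by omega))).2
    have hl2T : l2 (restr T v) ≤ Real.sqrt h * b := by
      calc l2 (restr T v) ≤ Real.sqrt T.card * b :=
            l2_restr_le T v hb fun i hi => hbd i (hTsub hi)
        _ ≤ Real.sqrt h * b := by
            apply mul_le_mul_of_nonneg_right _ hb
            exact Real.sqrt_le_sqrt (by exact_mod_cast hTle)
    have hl1split : l1 (restr S v) = l1 (restr T v) + l1 (restr R v) := l1_split hTsub v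
    rcases eq_or_lt_of_le hTle with hTeq | hTlt
    · -- T.card = h : recurse on R
      obtain ⟨i0, hi0T, hi0min⟩ := T.exists_min_image (fun i => |v i|) (card_pos.mp hTpos)
      set b' := |v i0| with hb'def
      have hb' : 0 ≤ b' := abs_nonneg _
      have hRbd : ∀ i ∈ R, |v i| ≤ b' := fun i hi => by
        obtain ⟨hiS, hiT⟩ := mem_sdiff.mp hi
        exact hTtop i hiS hiT i0 hi0T
      have hhb' : (h : ℝ) * b' ≤ l1 (restr T v) := by
        rw [l1_restr]
        calc (h : ℝ) * b' = ∑ _i ∈ T, b' := by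
              rw [Finset.sum_const, nsmul_eq_mul, hTeq]
          _ ≤ ∑ i ∈ T, |v i| := Finset.sum_le_sum fun i hi => hi0min i hi
      have hsb' : Real.sqrt h * b' ≤ l1 (restr T v) / Real.sqrt h := by
        rw [le_div_iff₀ hsh]
        calc Real.sqrt h * b' * Real.sqrt h = (h : ℝ) * b' := by
              rw [mul_comm, ← mul_assoc, Real.mul_self_sqrt (by positivity)]
          _ ≤ _ := hhb'
      have hIH := ih R hRcard b' hb' hRbd
      calc l2 (A.mulVec (restr S v)) ≤ _ := htri
        _ ≤ (1 + δ) * (Real.sqrt h * b) +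
            (1 + δ) * (Real.sqrt h * b' + l1 (restr R v) / Real.sqrt h) := by
            refine add_le_add (hripT.trans ?_) hIH
            exact mul_le_mul_of_nonneg_left hl2T (le_of_lt h1δ)
        _ ≤ (1 + δ) * (Real.sqrt h * b +
              (l1 (restr T v) / Real.sqrt h + l1 (restr R v) / Real.sqrt h)) := by
            rw [← mul_add]
            apply mul_le_mul_of_nonneg_left _ (le_of_lt h1δ)
            linarith
        _ = (1 + δ) * (Real.sqrt h * b + l1 (restr S v) / Real.sqrt h) := by
            rw [hl1split, add_div]
    · -- T.card < h : then T = S, R = ∅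
      have hTS : T = S := by
        apply Finset.eq_of_subset_of_card_le hTsub
        rw [hTcard]
        rcases le_or_gt S.card h with hc | hc
        · rw [min_eq_right hc]
        · rw [min_eq_left (le_of_lt hc)] at *
          omega
      have hRempty : R = ∅ := by rw [hR, hTS, sdiff_self]; rfl
      have hzero : l2 (A.mulVec (restr R v)) = 0 := by
        rw [hRempty, restr_empty, Matrix.mulVec_zero, l2_zero]
      have hnn : 0 ≤ l1 (restr S v) / Real.sqrt h := by
        apply div_nonneg (l1_nonneg _) (le_of_lt hsh)
      calc l2 (A.mulVec (restr S v)) ≤ _ := htri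
        _ = l2 (A.mulVec (restr T v)) := by rw [hzero, add_zero]
        _ ≤ (1 + δ) * (Real.sqrt h * b) := hripT.trans
            (mul_le_mul_of_nonneg_left hl2T (le_of_lt h1δ))
        _ ≤ (1 + δ) * (Real.sqrt h * b + l1 (restr S v) / Real.sqrt h) := by nlinarith

theorem stmt8 {m N : ℕ} (A : Matrix (Fin m) (Fin N) ℝ) (k h : ℕ)
    (hk : 0 < k) (hh : 0 < h) (δ : ℝ) (hδ0 : 0 < δ) (hδ1 : δ < 1)
    (hRIP : RIP A (k + h) δ) :
    NSP A k (Real.sqrt ((k : ℝ) / h) * (1 + δ) / (1 - δ)) := by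
  intro z hz Λ hΛ
  have hsh : (0:ℝ) < Real.sqrt h := Real.sqrt_pos.mpr (by exact_mod_cast hh)
  have h1δ : (0:ℝ) < 1 + δ := by linarith
  have h1δ' : (0:ℝ) < 1 - δ := by linarith
  obtain ⟨T, hTsub, hTcard, hTtop⟩ := exists_top (fun i => |z i|) h Λᶜ
  have hTle : T.card ≤ h := hTcard ▸ min_le_left _ _
  set W := Λ ∪ T with hW
  have hWcard : W.card ≤ k + h := le_trans (card_union_le Λ T) (by omega)
  have hWc : Wᶜ = Λᶜ \ T := by rw [hW, compl_union, sdiff_eq]; rfl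
  -- z splits as restr W z + restr Wᶜ z
  have hzsplit : restr W z + restr Wᶜ z = z := by
    funext i
    simp only [restr, Pi.add_apply, Finset.mem_compl]
    by_cases hi : i ∈ W <;> simp [hi]
  have hker : A.mulVec (restr W z) = - A.mulVec (restr Wᶜ z) := by
    apply eq_neg_of_add_eq_zero_left
    rw [← Matrix.mulVec_add, hzsplit, hz]
  set L := l1 (restr Λᶜ z) with hLdef
  have hL : 0 ≤ L := l1_nonneg _
  have hl1c : L = l1 (restr T z) + l1 (restr Wᶜ z) := by
    rw [hWc]; exact l1_split hTsub z
  -- bound on the complement part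
  have hbound : l2 (A.mulVec (restr Wᶜ z)) ≤ (1 + δ) * (L / Real.sqrt h) := by
    rcases eq_or_lt_of_le hTle with hTeq | hTlt
    · -- T.card = h
      have hTne : T.Nonempty := card_pos.mp (by omega)
      obtain ⟨i0, hi0T, hi0min⟩ := T.exists_min_image (fun i => |z i|) hTne
      set b' := |z i0| with hb'def
      have hb' : 0 ≤ b' := abs_nonneg _
      have hWbd : ∀ i ∈ Wᶜ, |z i| ≤ b' := fun i hi => by
        rw [hWc, mem_sdiff] at hi
        exact hTtop i hi.1 hi.2 i0 hi0T
      have hkey := keyC A k h hh δ hδ0 hRIP z (Wᶜ).card Wᶜ le_rfl b' hb' hWbd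
      have hhb' : (h : ℝ) * b' ≤ l1 (restr T z) := by
        rw [l1_restr]
        calc (h : ℝ) * b' = ∑ _i ∈ T, b' := by
              rw [Finset.sum_const, nsmul_eq_mul, hTeq]
          _ ≤ ∑ i ∈ T, |z i| := Finset.sum_le_sum fun i hi => hi0min i hi
      have hsb' : Real.sqrt h * b' ≤ l1 (restr T z) / Real.sqrt h := by
        rw [le_div_iff₀ hsh]
        calc Real.sqrt h * b' * Real.sqrt h = (h : ℝ) * b' := by
              rw [mul_comm, ← mul_assoc, Real.mul_self_sqrt (by positivity)]
          _ ≤ _ := hhb'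
      calc l2 (A.mulVec (restr Wᶜ z)) ≤
            (1 + δ) * (Real.sqrt h * b' + l1 (restr Wᶜ z) / Real.sqrt h) := hkey
        _ ≤ (1 + δ) * (l1 (restr T z) / Real.sqrt h + l1 (restr Wᶜ z) / Real.sqrt h) := by
            apply mul_le_mul_of_nonneg_left _ (le_of_lt h1δ)
            linarith
        _ = (1 + δ) * (L / Real.sqrt h) := by rw [hl1c, add_div]
    · -- T.card < h : T = Λᶜ, Wᶜ = ∅
      have hTS : T = Λᶜ := by
        apply Finset.eq_of_subset_of_card_le hTsub
        rw [hTcard]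
        rcases le_or_gt (Λᶜ).card h with hc | hc
        · rw [min_eq_right hc]
        · rw [min_eq_left (le_of_lt hc)] at *
          omega
      have hWce : Wᶜ = ∅ := by rw [hWc, hTS, sdiff_self]; rfl
      rw [hWce, restr_empty, Matrix.mulVec_zero, l2_zero]
      positivity
  -- lower RIP bound on W
  have hlow : (1 - δ) * l2 (restr W z) ≤ (1 + δ) * (L / Real.sqrt h) := by
    have hr := (hRIP (restr W z)
      (le_trans (card_le_card (supp_restr_subset W z)) hWcard)).1
    calc (1 - δ) * l2 (restr W z) ≤ l2 (A.mulVec (restr W z)) := hr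
      _ = l2 (A.mulVec (restr Wᶜ z)) := by rw [hker, l2_neg]
      _ ≤ _ := hbound
  -- l1 on Λ vs l2 on W
  have hl1Λ : l1 (restr Λ z) ≤ Real.sqrt k * l2 (restr W z) := by
    calc l1 (restr Λ z) ≤ Real.sqrt Λ.card * l2 (restr Λ z) := l1_le_sqrt_card_mul_l2 Λ z
      _ ≤ Real.sqrt k * l2 (restr W z) := by
          apply mul_le_mul
          · exact Real.sqrt_le_sqrt (by exact_mod_cast hΛ)
          · apply l2_mono
            intro i
            simp only [restr]
            by_cases hi : i ∈ Λ
            · simp [hi, show i ∈ W from Finset.mem_union.mpr (Or.inl hi)]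
            · simp [hi]
              positivity
          · exact l2_nonneg _
          · positivity
  have hX : l2 (restr W z) ≤ (1 + δ) * (L / Real.sqrt h) / (1 - δ) :=
    (le_div_iff₀ h1δ').mpr (by linarith)
  calc l1 (restr Λ z) ≤ Real.sqrt k * l2 (restr W z) := hl1Λ
    _ ≤ Real.sqrt k * ((1 + δ) * (L / Real.sqrt h) / (1 - δ)) :=
        mul_le_mul_of_nonneg_left hX (Real.sqrt_nonneg _)
    _ = Real.sqrt ((k : ℝ) / h) * (1 + δ) / (1 - δ) * L := by
        rw [Real.sqrt_div (by positivity)]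
        field_simp
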